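/- (Persistence lemma.) In the proto-cell model with kinetics compatible with the network structure, suppose that every siphon Z containing some species of S_me contains the support of a fed moiety combination. Then along every bounded solution A of the proto-cell ODE with strictly positive initial conditions (A_i(0) > 0 for all i), every species in S_me is persistent: liminf_{t→∞} A_i(t) > 0 for all i ∈ S_me. -/

import Mathlib

open Matrix Filter
open Set

lemma aux_min_pos {α : Type*} [TopologicalSpace α] {K : Set α} (hK : IsCompact K)
    {ψ : α → ℝ} (hψ : Continuous ψ) (hpos : ∀ x ∈ K, 0 < ψ x) :
    ∃ δ > 0, ∀ x ∈ K, δ ≤ ψ x := by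
  rcases K.eq_empty_or_nonempty with h | h
  · exact ⟨1, one_pos, by simp [h]⟩
  · obtain ⟨x₀, hx₀, hmin⟩ := hK.exists_isMinOn h hψ.continuousOn
    exact ⟨ψ x₀, hpos _ hx₀, fun x hx => hmin hx⟩

lemma aux_modulus {α : Type*} [TopologicalSpace α] {K : Set α} (hK : IsCompact K)
    {Φ ψ : α → ℝ} (hΦ : Continuous Φ) (hψ : Continuous ψ) {ε : ℝ}
    (hkey : ∀ x ∈ K, ε ≤ Φ x → 0 < ψ x) :
    ∃ η > 0, ∀ x ∈ K, ψ x ≤ η → Φ x < ε := by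
  have hK' : IsCompact (K ∩ Φ ⁻¹' (Ici ε)) :=
    hK.inter_right (isClosed_Ici.preimage hΦ)
  obtain ⟨δ, hδ, hmin⟩ := aux_min_pos hK' hψ (fun x hx => hkey x hx.1 hx.2)
  refine ⟨δ / 2, by linarith, fun x hx hxψ => ?_⟩
  by_contra hcon
  have : x ∈ K ∩ Φ ⁻¹' (Ici ε) := ⟨hx, le_of_not_gt hcon⟩
  have := hmin x this
  linarith

lemma aux_grow {h h' : ℝ → ℝ} {a b κ : ℝ} (hab : a ≤ b)
    (hderiv : ∀ t ∈ Icc a b, HasDerivWithinAt h (h' t) (Icc a b) t)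
    (hge : ∀ t ∈ Icc a b, κ ≤ h' t) : h a + κ * (b - a) ≤ h b := by
  have hcont : ContinuousOn h (Icc a b) := fun t ht => (hderiv t ht).continuousWithinAt
  set H : ℝ → ℝ := fun t => h t - κ * t with hH
  have hmono : MonotoneOn H (Icc a b) := by
    apply monotoneOn_of_deriv_nonneg (convex_Icc a b)
    · exact hcont.sub ((continuous_const.mul continuous_id).continuousOn)
    · intro t ht
      rw [interior_Icc] at ht
      have hd : HasDerivAt H (h' t - κ) t := by
        have h1 : HasDerivAt h (h' t) t :=
          (hderiv t (Ioo_subset_Icc_self ht)).hasDerivAt (Icc_mem_nhds ht.1 ht.2)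
        have h2 := h1.sub ((hasDerivAt_id t).const_mul κ)
        simp only [id, mul_one] at h2
        exact h2
      exact hd.differentiableAt.differentiableWithinAt
    · intro t ht
      rw [interior_Icc] at ht
      have hd : HasDerivAt H (h' t - κ) t := by
        have h1 : HasDerivAt h (h' t) t :=
          (hderiv t (Ioo_subset_Icc_self ht)).hasDerivAt (Icc_mem_nhds ht.1 ht.2)
        have h2 := h1.sub ((hasDerivAt_id t).const_mul κ)
        simp only [id, mul_one] at h2
        exact h2
      rw [hd.deriv]
      have := hge t (Ioo_subset_Icc_self ht)
      linarith
  have := hmono (left_mem_Icc.2 hab) (right_mem_Icc.2 hab) hab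
  simp only [hH] at this
  nlinarith

lemma aux_barrier {h h' : ℝ → ℝ} {a b η κ : ℝ} (hab : a ≤ b) (hκ : 0 < κ)
    (hderiv : ∀ t ∈ Icc a b, HasDerivWithinAt h (h' t) (Icc a b) t)
    (hstep : ∀ t ∈ Icc a b, h t ≤ η → κ ≤ h' t) :
    min η (h a + κ * (b - a)) ≤ h b := by
  have hcont : ContinuousOn h (Icc a b) := fun t ht => (hderiv t ht).continuousWithinAt
  by_cases hall : ∀ t ∈ Icc a b, h t ≤ η
  · have := aux_grow hab hderiv (fun t ht => hstep t ht (hall t ht))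
    exact le_trans (min_le_right _ _) this
  push_neg at hall
  obtain ⟨v, hv, hvη⟩ := hall
  rcases le_or_gt (h b) η with hbη | hbη
  swap
  · exact le_trans (min_le_left _ _) hbη.le
  -- last crossing
  set Q : Set ℝ := Icc a b ∩ h ⁻¹' (Ici η) with hQ
  have hQne : Q.Nonempty := ⟨v, hv, le_of_lt hvη⟩
  have hQbdd : BddAbove Q := ⟨b, fun t ht => ht.1.2⟩
  have hQclosed : IsClosed Q := hcont.preimage_isClosed_of_isClosed isClosed_Icc isClosed_Ici
  set u := sSup Q with hu
  have huQ : u ∈ Q := hQclosed.csSup_mem hQne hQbdd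
  have hub : u ≤ b := huQ.1.2
  have hua : a ≤ u := huQ.1.1
  have hηu : η ≤ h u := huQ.2
  have hlt : ∀ t, u < t → t ≤ b → h t < η := by
    intro t h1 h2
    by_contra hc
    have : t ∈ Q := ⟨⟨hua.trans h1.le, h2⟩, le_of_not_gt hc⟩
    exact absurd (le_csSup hQbdd this) (not_le.2 h1)
  -- on [u, b], h ≤ η... need h u ≤ η via right continuity if u < b
  rcases eq_or_lt_of_le hub with heq | hub'
  · exact le_trans (min_le_left _ _) (heq ▸ hηu)
  have huη : h u ≤ η := by
    have hcw : ContinuousWithinAt h (Icc a b) u := hcont u huQ.1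
    have hcw' : Tendsto h (nhdsWithin u (Ioc u b)) (nhds (h u)) :=
      hcw.mono_left (nhdsWithin_mono u (fun t ht => ⟨hua.trans ht.1.le, ht.2⟩))
    have hne : (nhdsWithin u (Ioc u b)).NeBot := by
      apply mem_closure_iff_nhdsWithin_neBot.1
      rw [closure_Ioc (ne_of_lt hub')]
      exact ⟨le_refl u, hub'.le⟩
    refine le_of_tendsto hcw' ?_
    filter_upwards [self_mem_nhdsWithin] with t ht
    exact (hlt t ht.1 ht.2).le
  have hsub : Icc u b ⊆ Icc a b := Icc_subset_Icc hua le_rfl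
  have hsmall : ∀ t ∈ Icc u b, h t ≤ η := by
    intro t ht
    rcases eq_or_lt_of_le ht.1 with rfl | h1
    · exact huη
    · exact (hlt t h1 ht.2).le
  have := aux_grow hub'.le (fun t ht => (hderiv t (hsub ht)).mono hsub)
    (fun t ht => hstep t (hsub ht) (hsmall t ht))
  have : h u ≤ h b := by nlinarith
  exact le_trans (min_le_left _ _) (le_trans hηu this)


/-- Persistence lemma: if every (nonempty) siphon containing some
species of `S_me` contains the support of a fed moiety combination, then along every
bounded solution with strictly positive initial conditions every species of `S_me` is
persistent. -/
theorem protocell_membrane_species_persistence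
    (N R : ℕ) (Y Y' : Matrix (Fin N) (Fin R) ℕ)
    (S : Matrix (Fin N) (Fin R) ℝ)
    (hS : ∀ i j, S i j = (Y' i j : ℝ) - (Y i j : ℝ))
    (f : (Fin N → ℝ) → Fin R → ℝ) (hf_cont : Continuous f)
    (hf_nonneg : ∀ x : Fin N → ℝ, (∀ i, 0 ≤ x i) → ∀ j, 0 ≤ f x j)
    (hf_compat_zero : ∀ (j : Fin R) (x : Fin N → ℝ), (∀ i, 0 ≤ x i) →
      (∃ k, 0 < Y k j ∧ x k = 0) → f x j = 0)
    (hf_compat_pos : ∀ (j : Fin R) (x : Fin N → ℝ), (∀ k, 0 < Y k j → 0 < x k) →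
      0 < f x j)
    (me : Fin N) (Sme : Finset (Fin N)) (hme : me ∈ Sme)
    (Cme : ℝ) (hCme : 0 < Cme)
    (fme : (Fin N → ℝ) → ℝ) (hfme_cont : Continuous fme)
    (hfme_nonneg : ∀ x : Fin N → ℝ, (∀ i, 0 ≤ x i) → 0 ≤ fme x)
    (hfme_mono : ∀ x y : Fin N → ℝ, (∀ i, x i ≤ y i) → fme x ≤ fme y)
    (hfme_pos : ∀ x : Fin N → ℝ, (∀ i, 0 ≤ x i) → (0 < fme x ↔ ∀ i ∈ Sme, 0 < x i))
    (Snu : Finset (Fin N)) (fnu : Fin N → ℝ)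
    (hfnu_nonneg : ∀ i, 0 ≤ fnu i) (hfnu_supp : ∀ i ∉ Snu, fnu i = 0)
    (hsiphon : ∀ Z : Set (Fin N), Z.Nonempty →
      (∀ (j : Fin R), ∀ i ∈ Z, 0 < Y' i j → ∃ k ∈ Z, 0 < Y k j) →
      (∃ i ∈ Sme, i ∈ Z) →
      ∃ b : Fin N → ℝ, b ≠ 0 ∧ (∀ i, 0 ≤ b i) ∧ Matrix.vecMul b S = 0 ∧
        0 < b ⬝ᵥ fnu ∧ ∀ i, 0 < b i → i ∈ Z)
    (A : ℝ → Fin N → ℝ)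
    (hA_nonneg : ∀ t ≥ (0:ℝ), ∀ i, 0 ≤ A t i)
    (hODE : ∀ t ≥ (0:ℝ), HasDerivWithinAt A
      (S.mulVec (f (A t)) + fnu - fme (A t) • (Pi.single me 1 : Fin N → ℝ)
        - (fme (A t) / Cme) • A t) (Set.Ici 0) t)
    (hA_bounded : ∃ M : ℝ, ∀ t ≥ (0:ℝ), ‖A t‖ ≤ M)
    (hA_pos_init : ∀ i, 0 < A 0 i) :
    ∀ i ∈ Sme, 0 < Filter.liminf (fun t => A t i) Filter.atTop := by
  intro i hiSme
  by_contra hcon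
  obtain ⟨M, hM⟩ := hA_bounded
  have hM0 : 0 ≤ M := le_trans (norm_nonneg _) (hM 0 le_rfl)
  -- the compact box containing the trajectory
  set B : Set (Fin N → ℝ) := Set.Icc 0 (fun _ => M) with hBdef
  have hBcompact : IsCompact B := isCompact_Icc
  have hBnn : ∀ z ∈ B, ∀ k, 0 ≤ z k := fun z hz k => hz.1 k
  have hAinB : ∀ t ≥ (0:ℝ), A t ∈ B := by
    intro t ht
    refine ⟨fun k => hA_nonneg t ht k, fun k => ?_⟩
    calc A t k ≤ |A t k| := le_abs_self _
    _ = ‖A t k‖ := rfl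
    _ ≤ ‖A t‖ := norm_le_pi_norm (A t) k
    _ ≤ M := hM t ht
  -- the vector field
  set F : (Fin N → ℝ) → (Fin N → ℝ) := fun z =>
    S.mulVec (f z) + fnu - fme z • (Pi.single me 1 : Fin N → ℝ) - (fme z / Cme) • z with hFdef
  have hFcont : Continuous F := by
    have h1 : Continuous (fun z : Fin N → ℝ => S.mulVec (f z)) := by
      apply continuous_pi; intro k
      simp only [Matrix.mulVec, dotProduct]
      exact continuous_finset_sum _ fun j' _ =>
        continuous_const.mul ((continuous_apply j').comp hf_cont)
    exact (((h1.add continuous_const).sub (hfme_cont.smul continuous_const)).sub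
      ((hfme_cont.div_const Cme).smul continuous_id))
  have hODE' : ∀ t ≥ (0:ℝ), HasDerivWithinAt A (F (A t)) (Set.Ici 0) t := hODE
  -- bound on the vector field over the box
  obtain ⟨D0, hD0⟩ := hBcompact.exists_bound_of_continuousOn hFcont.continuousOn
  set D : ℝ := max D0 1 with hDdef
  have hDpos : (0:ℝ) < D := lt_of_lt_of_le one_pos (le_max_right _ _)
  have hDF : ∀ z ∈ B, ‖F z‖ ≤ D := fun z hz => le_trans (hD0 z hz) (le_max_left _ _)
  -- Lipschitz bound on the trajectory
  have hLip : ∀ a b : ℝ, 0 ≤ a → a ≤ b → ‖A b - A a‖ ≤ D * (b - a) := by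
    intro a b ha hab
    have := Convex.norm_image_sub_le_of_norm_hasDerivWithin_le
      (f := A) (f' := fun t => F (A t)) (C := D) (s := Set.Ici 0)
      (fun t ht => hODE' t ht) (fun t ht => hDF (A t) (hAinB t ht)) (convex_Ici 0)
      ha (le_trans ha hab)
    calc ‖A b - A a‖ ≤ D * ‖b - a‖ := this
    _ = D * (b - a) := by rw [Real.norm_eq_abs, abs_of_nonneg (by linarith)]
  -- bound on fme over the box
  obtain ⟨Cf0, hCf0⟩ := hBcompact.exists_bound_of_continuousOn hfme_cont.continuousOn
  set Cf : ℝ := max Cf0 0 with hCfdef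
  have hCf : ∀ z ∈ B, fme z ≤ Cf := by
    intro z hz
    calc fme z ≤ |fme z| := le_abs_self _
    _ ≤ Cf0 := hCf0 z hz
    _ ≤ Cf := le_max_left _ _
  set Λ : ℝ := Cf / Cme with hΛdef
  have hΛ : ∀ z ∈ B, fme z / Cme ≤ Λ := fun z hz =>
    div_le_div_of_nonneg_right (hCf z hz) hCme.le
  -- times where A _ i is small
  have hliminf : Filter.liminf (fun t => A t i) Filter.atTop ≤ 0 := not_lt.1 hcon
  have htimes : ∀ n : ℕ, ∃ t, (n:ℝ) ≤ t ∧ A t i < 1/(n+1) := by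
    intro n
    have h1 : Filter.liminf (fun t => A t i) Filter.atTop < 1/(n+1) :=
      lt_of_le_of_lt hliminf (by positivity)
    have hbdd : Filter.IsCoboundedUnder (· ≥ ·) Filter.atTop (fun t => A t i) := by
      apply Filter.IsBoundedUnder.isCoboundedUnder_ge
      exact ⟨M, Filter.eventually_atTop.2 ⟨0, fun t ht => by
        calc A t i ≤ |A t i| := le_abs_self _
        _ = ‖A t i‖ := rfl
        _ ≤ ‖A t‖ := norm_le_pi_norm (A t) i
        _ ≤ M := hM t ht⟩⟩
    have h2 : ∃ᶠ t in Filter.atTop, A t i < 1/(n+1) :=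
      Filter.frequently_lt_of_liminf_lt hbdd h1
    obtain ⟨t, ht1, ht2⟩ := (Filter.frequently_atTop.1 h2) n
    exact ⟨t, ht1, ht2⟩
  choose t ht0 hti using htimes
  have ht0' : ∀ n, (0:ℝ) ≤ t n := fun n => le_trans (Nat.cast_nonneg n) (ht0 n)
  have htconv : Filter.Tendsto (fun n => A (t n) i) Filter.atTop (nhds 0) := by
    apply squeeze_zero (fun n => hA_nonneg (t n) (ht0' n) i) (fun n => (hti n).le)
    exact tendsto_one_div_add_atTop_nhds_zero_nat
  -- Bolzano–Weierstrass
  obtain ⟨x, hxB, φ, hφ, hconv⟩ := hBcompact.tendsto_subseq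
    (x := fun n => A (t n)) (fun n => hAinB (t n) (ht0' n))
  set s : ℕ → ℝ := fun n => t (φ n) with hsdef
  have hs0 : ∀ n, (0:ℝ) ≤ s n := fun n => ht0' (φ n)
  have hsconv : Filter.Tendsto (fun n => A (s n)) Filter.atTop (nhds x) := hconv
  have hsinf : Filter.Tendsto s Filter.atTop Filter.atTop := by
    apply Filter.tendsto_atTop_mono (fun n => ?_) tendsto_natCast_atTop_atTop
    calc (n:ℝ) ≤ (φ n : ℝ) := Nat.cast_le.2 (hφ.le_apply)
    _ ≤ t (φ n) := ht0 (φ n)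
  have hcompconv : ∀ k, Filter.Tendsto (fun n => A (s n) k) Filter.atTop (nhds (x k)) :=
    fun k => (continuous_apply k).continuousAt.tendsto.comp hsconv
  have hxi : x i = 0 := by
    have h2 : Filter.Tendsto (fun n => A (s n) i) Filter.atTop (nhds 0) :=
      htconv.comp hφ.tendsto_atTop
    exact tendsto_nhds_unique (hcompconv i) h2
  set Z : Set (Fin N) := {k | x k = 0} with hZdef
  have hiZ : i ∈ Z := hxi
  -- Z is a siphon
  have hZsiphon : ∀ (j : Fin R), ∀ p ∈ Z, 0 < Y' p j → ∃ k ∈ Z, 0 < Y k j := by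
    intro j p hpZ hYp'
    by_cases hYp : 0 < Y p j
    · exact ⟨p, hpZ, hYp⟩
    have hYp0 : Y p j = 0 := Nat.eq_zero_of_not_pos hYp
    by_contra hno
    push_neg at hno
    have hreactpos : ∀ k, 0 < Y k j → 0 < x k := by
      intro k hk
      rcases lt_or_eq_of_le (hxB.1 k) with h | h
      · exact h
      · have := hno k h.symm; omega
    -- a uniform lower bound on reactant concentrations at x
    have hδex : ∃ δ > (0:ℝ), ∀ k, 0 < Y k j → 2*δ ≤ x k := by
      classical
      set T := Finset.univ.filter (fun k => 0 < Y k j) with hT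
      rcases T.eq_empty_or_nonempty with hTe | hTne
      · refine ⟨1, one_pos, fun k hk => ?_⟩
        exfalso
        have hkT : k ∈ T := Finset.mem_filter.2 ⟨Finset.mem_univ k, hk⟩
        rw [hTe] at hkT
        exact absurd hkT (Finset.notMem_empty k)
      · obtain ⟨k₀, hk₀T, hk₀min⟩ := T.exists_min_image x hTne
        have hx₀ : 0 < x k₀ := hreactpos k₀ (Finset.mem_filter.1 hk₀T).2
        refine ⟨x k₀ / 2, by positivity, fun k hk => ?_⟩
        have := hk₀min k (Finset.mem_filter.2 ⟨Finset.mem_univ k, hk⟩)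
        linarith
    obtain ⟨δ, hδpos, hδ⟩ := hδex
    -- the compact region where all reactants of j are ≥ δ
    set Kδ : Set (Fin N → ℝ) := B ∩ {z | ∀ k, 0 < Y k j → δ ≤ z k} with hKδdef
    have hKδcompact : IsCompact Kδ := by
      apply hBcompact.inter_right
      have : {z : Fin N → ℝ | ∀ k, 0 < Y k j → δ ≤ z k}
          = ⋂ k ∈ {k : Fin N | 0 < Y k j}, (fun z : Fin N → ℝ => z k) ⁻¹' (Set.Ici δ) := by
        ext z; simp [Set.mem_iInter]
      rw [this]
      exact isClosed_biInter (fun k _ => isClosed_Ici.preimage (continuous_apply k))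
    -- positive lower bound for the rate of reaction j there
    obtain ⟨ε, hεpos, hεmin⟩ := aux_min_pos hKδcompact ((continuous_apply j).comp hf_cont)
      (fun z hz => hf_compat_pos j z (fun k hk => lt_of_lt_of_le hδpos (hz.2 k hk)))
    -- the "drain" function for species p
    set Φ : (Fin N → ℝ) → ℝ := fun z =>
      (∑ j' : Fin R, (Y p j' : ℝ) * f z j') + (if p = me then (1:ℝ) else 0) * fme z + Λ * z p
      with hΦdef
    have hΦcont : Continuous Φ := by
      apply Continuous.add
      apply Continuous.add
      · exact continuous_finset_sum _ fun j' _ =>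
          continuous_const.mul ((continuous_apply j').comp hf_cont)
      · exact continuous_const.mul hfme_cont
      · exact continuous_const.mul (continuous_apply p)
    have hΦzero : ∀ z ∈ B, z p = 0 → Φ z = 0 := by
      intro z hz hzp
      have hsum : (∑ j' : Fin R, (Y p j' : ℝ) * f z j') = 0 := by
        apply Finset.sum_eq_zero
        intro j' _
        by_cases h : 0 < Y p j'
        · rw [hf_compat_zero j' z (hBnn z hz) ⟨p, h, hzp⟩, mul_zero]
        · rw [Nat.eq_zero_of_not_pos h]; simp
      have hfmez : (if p = me then (1:ℝ) else 0) * fme z = 0 := by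
        by_cases h : p = me
        · have : ¬ 0 < fme z := by
            rw [hfme_pos z (hBnn z hz)]
            push_neg
            exact ⟨me, hme, by rw [← h, hzp]⟩
          simp [h, le_antisymm (not_lt.1 this) (hfme_nonneg z (hBnn z hz))]
        · simp [h]
      simp only [hΦdef]
      rw [hsum, hfmez, hzp]
      ring
    -- modulus: Φ is small when z p is small
    obtain ⟨η, hηpos, hηmod⟩ := aux_modulus hBcompact hΦcont (continuous_apply p)
      (ε := ε/2) (by
        intro z hz hΦz
        by_contra h
        have hzp : z p = 0 := le_antisymm (not_lt.1 h) (hz.1 p)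
        rw [hΦzero z hz hzp] at hΦz
        linarith)
    -- lower bound for the p-component of the vector field
    have hFlow : ∀ z ∈ B, f z j - Φ z ≤ F z p := by
      intro z hz
      have hz0 := hBnn z hz
      have hsplit : (∑ j' : Fin R, S p j' * f z j')
          = (∑ j' : Fin R, (Y' p j' : ℝ) * f z j') - ∑ j' : Fin R, (Y p j' : ℝ) * f z j' := by
        rw [← Finset.sum_sub_distrib]
        apply Finset.sum_congr rfl
        intro j' _
        rw [hS p j', sub_mul]
      have hterm : f z j ≤ ∑ j' : Fin R, (Y' p j' : ℝ) * f z j' := by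
        calc f z j = 1 * f z j := (one_mul _).symm
        _ ≤ (Y' p j : ℝ) * f z j := by
            apply mul_le_mul_of_nonneg_right _ (hf_nonneg z hz0 j)
            exact_mod_cast Nat.one_le_iff_ne_zero.2 (Nat.pos_iff_ne_zero.1 hYp')
        _ ≤ ∑ j' : Fin R, (Y' p j' : ℝ) * f z j' := by
            apply Finset.single_le_sum (f := fun j' => (Y' p j' : ℝ) * f z j')
              (fun j' _ => mul_nonneg (Nat.cast_nonneg _) (hf_nonneg z hz0 j'))
              (Finset.mem_univ j)
      have hsingle : fme z * ((Pi.single me 1 : Fin N → ℝ) p) = (if p = me then (1:ℝ) else 0) * fme z := by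
        rw [Pi.single_apply]
        by_cases h : p = me <;> simp [h, mul_comm]
      have hdil : (fme z / Cme) * z p ≤ Λ * z p :=
        mul_le_mul_of_nonneg_right (hΛ z hz) (hz0 p)
      have hFp : F z p = (∑ j' : Fin R, S p j' * f z j') + fnu p
          - fme z * ((Pi.single me 1 : Fin N → ℝ) p) - (fme z / Cme) * z p := by
        simp [hFdef, Matrix.mulVec, dotProduct, Pi.add_apply, Pi.sub_apply,
          Pi.smul_apply, smul_eq_mul]
      rw [hFp, hsplit, hsingle]
      have hfnup : 0 ≤ fnu p := hfnu_nonneg p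
      rw [hΦdef]
      simp only []
      linarith
    -- choose n large enough
    set τ : ℝ := δ / (2 * D) with hτdef
    have hτpos : 0 < τ := by positivity
    set ρ : ℝ := min η (ε/2 * τ) with hρdef
    have hρpos : 0 < ρ := lt_min hηpos (by positivity)
    have hev1 : ∀ᶠ n in Filter.atTop, τ ≤ s n := hsinf.eventually_ge_atTop τ
    have hev2 : ∀ᶠ n in Filter.atTop, ‖A (s n) - x‖ < δ/2 := by
      have := NormedAddCommGroup.tendsto_atTop.1 hsconv
      obtain ⟨n₀, hn₀⟩ := this (δ/2) (by positivity)
      exact Filter.eventually_atTop.2 ⟨n₀, hn₀⟩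
    have hev3 : ∀ᶠ n in Filter.atTop, A (s n) p < ρ := by
      have h2 : Filter.Tendsto (fun n => A (s n) p) Filter.atTop (nhds 0) := by
        have := hcompconv p; rwa [hpZ] at this
      exact (h2.eventually (eventually_lt_nhds hρpos))
    obtain ⟨n, h1, h2, h3⟩ := (hev1.and (hev2.and hev3)).exists
    -- on [s n − τ, s n] all reactants stay ≥ δ
    have ha0 : (0:ℝ) ≤ s n - τ := by linarith
    have hIcc : ∀ u ∈ Set.Icc (s n - τ) (s n), (0:ℝ) ≤ u := fun u hu => le_trans ha0 hu.1
    have hAK : ∀ u ∈ Set.Icc (s n - τ) (s n), A u ∈ Kδ := by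
      intro u hu
      refine ⟨hAinB u (hIcc u hu), fun k hk => ?_⟩
      have hxk : 2*δ ≤ x k := hδ k hk
      have hnear : |A (s n) k - x k| < δ/2 := by
        calc |A (s n) k - x k| = ‖(A (s n) - x) k‖ := by simp [Pi.sub_apply]
        _ ≤ ‖A (s n) - x‖ := norm_le_pi_norm _ k
        _ < δ/2 := h2
      have hlip : |A (s n) k - A u k| ≤ D * (s n - u) := by
        calc |A (s n) k - A u k| = ‖(A (s n) - A u) k‖ := by simp [Pi.sub_apply]
        _ ≤ ‖A (s n) - A u‖ := norm_le_pi_norm _ k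
        _ ≤ D * (s n - u) := hLip u (s n) (hIcc u hu) hu.2
      have hDu : D * (s n - u) ≤ D * τ := by
        apply mul_le_mul_of_nonneg_left _ hDpos.le
        have := hu.1; linarith
      have hDτ : D * τ = δ/2 := by
        rw [hτdef]; field_simp
      have h5 := abs_lt.1 hnear
      have h6 := abs_le.1 hlip
      have h7 : D * (s n - u) ≤ δ/2 := by rw [← hDτ]; exact hDu
      linarith [h5.2, h6.1, h6.2, h5.1]
    -- apply the barrier lemma on this interval
    have hder : ∀ u ∈ Set.Icc (s n - τ) (s n),
        HasDerivWithinAt (fun v => A v p) (F (A u) p) (Set.Icc (s n - τ) (s n)) u := by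
      intro u hu
      have := (hODE' u (hIcc u hu)).mono (fun v hv => hIcc v hv)
      exact hasDerivWithinAt_pi.1 this p
    have hstep : ∀ u ∈ Set.Icc (s n - τ) (s n), A u p ≤ η → ε/2 ≤ F (A u) p := by
      intro u hu hup
      have hKu := hAK u hu
      have h4 : ε ≤ f (A u) j := hεmin (A u) hKu
      have h5 : Φ (A u) < ε/2 := hηmod (A u) hKu.1 hup
      have h6 := hFlow (A u) hKu.1
      calc ε/2 = ε - ε/2 := by ring
      _ ≤ f (A u) j - Φ (A u) := by linarith
      _ ≤ F (A u) p := h6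
    have hbar := aux_barrier (by linarith : s n - τ ≤ s n) (by positivity : (0:ℝ) < ε/2)
      hder hstep
    have hA0 : 0 ≤ A (s n - τ) p := hA_nonneg _ ha0 p
    have hfin : ρ ≤ A (s n) p := by
      refine le_trans (le_min (min_le_left _ _) ?_) hbar
      refine le_trans (min_le_right _ _) ?_
      have he : s n - (s n - τ) = τ := by ring
      rw [he]
      linarith
    linarith
  -- apply the siphon hypothesis to get a fed moiety combination
  obtain ⟨bb, hbb0, hbbnn, hbbS, hbbfnu, hbbsupp⟩ :=
    hsiphon Z ⟨i, hiZ⟩ hZsiphon ⟨i, hiSme, hiZ⟩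
  have hdot_def : ∀ v w : Fin N → ℝ, v ⬝ᵥ w = ∑ k : Fin N, v k * w k := fun _ _ => rfl
  set c' : ℝ := bb ⬝ᵥ fnu with hc'def
  have hc'pos : 0 < c' := hbbfnu
  set g : ℝ → ℝ := fun u => bb ⬝ᵥ A u with hgdef
  set Φ₂ : (Fin N → ℝ) → ℝ := fun z => fme z * bb me + (fme z / Cme) * (bb ⬝ᵥ z) with hΦ₂def
  have hdotcont : Continuous (fun z : Fin N → ℝ => bb ⬝ᵥ z) := by
    simp only [hdot_def]
    exact continuous_finset_sum _ fun k _ => continuous_const.mul (continuous_apply k)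
  have hΦ₂cont : Continuous Φ₂ :=
    (hfme_cont.mul continuous_const).add ((hfme_cont.div_const Cme).mul hdotcont)
  -- derivative of g
  have hgder : ∀ u ≥ (0:ℝ), HasDerivWithinAt g (c' - Φ₂ (A u)) (Set.Ici 0) u := by
    intro u hu
    have h1 : HasDerivWithinAt g (bb ⬝ᵥ F (A u)) (Set.Ici 0) u := by
      have hcomp := hasDerivWithinAt_pi.1 (hODE' u hu)
      have h2 : HasDerivWithinAt (fun v => ∑ k : Fin N, bb k * A v k)
          (∑ k : Fin N, bb k * F (A u) k) (Set.Ici 0) u :=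
        HasDerivWithinAt.fun_sum (fun k _ => (hcomp k).const_mul (bb k))
      simpa [hgdef, hdot_def] using h2
    have heq : bb ⬝ᵥ F (A u) = c' - Φ₂ (A u) := by
      have hmv : bb ⬝ᵥ (S.mulVec (f (A u))) = 0 := by
        rw [Matrix.dotProduct_mulVec, hbbS, zero_dotProduct]
      have hsingle : bb ⬝ᵥ (Pi.single me 1 : Fin N → ℝ) = bb me := by
        rw [dotProduct_single, mul_one]
      simp only [hFdef, dotProduct_add, dotProduct_sub, dotProduct_smul,
        smul_eq_mul, hmv, hsingle, hΦ₂def]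
      rw [hc'def]
      ring
    exact heq ▸ h1
  -- modulus for Φ₂
  have hkey : ∀ z ∈ B, c'/2 ≤ Φ₂ z → 0 < bb ⬝ᵥ z := by
    intro z hz h
    by_contra hc
    have hnn : ∀ k ∈ Finset.univ, 0 ≤ bb k * z k :=
      fun k _ => mul_nonneg (hbbnn k) (hz.1 k)
    have hdz : bb ⬝ᵥ z = 0 := by
      rw [hdot_def]
      refine le_antisymm ?_ (Finset.sum_nonneg hnn)
      rw [← hdot_def]; exact not_lt.1 hc
    have hterm : ∀ k, bb k * z k = 0 := by
      rw [hdot_def] at hdz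
      have := (Finset.sum_eq_zero_iff_of_nonneg hnn).1 hdz
      exact fun k => this k (Finset.mem_univ k)
    have hfmeterm : fme z * bb me = 0 := by
      rcases eq_or_lt_of_le (hbbnn me) with h0 | h0
      · rw [← h0, mul_zero]
      · have hzme : z me = 0 := by
          rcases mul_eq_zero.1 (hterm me) with h' | h'
          · exact absurd h' (ne_of_gt h0)
          · exact h'
        have hnotpos : ¬ 0 < fme z := by
          rw [hfme_pos z hz.1]
          push_neg; exact ⟨me, hme, by rw [hzme]⟩
        rw [le_antisymm (not_lt.1 hnotpos) (hfme_nonneg z hz.1), zero_mul]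
    have hΦ₂z : Φ₂ z = 0 := by
      simp only [hΦ₂def]
      rw [hfmeterm, hdz, mul_zero, add_zero]
    rw [hΦ₂z] at h
    linarith
  obtain ⟨η₂, hη₂pos, hη₂mod⟩ := aux_modulus hBcompact hΦ₂cont hdotcont (ε := c'/2) hkey
  have hg0 : 0 < g 0 := by
    obtain ⟨k₀, hk₀⟩ := Function.ne_iff.1 hbb0
    have hk₀pos : 0 < bb k₀ := lt_of_le_of_ne (hbbnn k₀) (Ne.symm hk₀)
    have : 0 < ∑ k : Fin N, bb k * A 0 k :=
      Finset.sum_pos' (fun k _ => mul_nonneg (hbbnn k) (hA_pos_init k).le)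
        ⟨k₀, Finset.mem_univ k₀, mul_pos hk₀pos (hA_pos_init k₀)⟩
    simpa [hgdef, hdot_def] using this
  set m : ℝ := min η₂ (g 0) with hmdef
  have hmpos : 0 < m := lt_min hη₂pos hg0
  have hglim : Filter.Tendsto (fun n => g (s n)) Filter.atTop (nhds 0) := by
    have h1 : Filter.Tendsto (fun n => bb ⬝ᵥ A (s n)) Filter.atTop (nhds (bb ⬝ᵥ x)) :=
      hdotcont.continuousAt.tendsto.comp hsconv
    have h2 : bb ⬝ᵥ x = 0 := by
      rw [hdot_def]
      apply Finset.sum_eq_zero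
      intro k _
      rcases eq_or_lt_of_le (hbbnn k) with h0 | h0
      · rw [← h0, zero_mul]
      · have hxk : x k = 0 := hbbsupp k h0
        rw [hxk, mul_zero]
    rwa [h2] at h1
  obtain ⟨n, hn⟩ := (hglim.eventually (eventually_lt_nhds hmpos)).exists
  have hder2 : ∀ u ∈ Set.Icc (0:ℝ) (s n),
      HasDerivWithinAt g (c' - Φ₂ (A u)) (Set.Icc (0:ℝ) (s n)) u :=
    fun u hu => (hgder u hu.1).mono (fun v hv => hv.1)
  have hstep2 : ∀ u ∈ Set.Icc (0:ℝ) (s n), g u ≤ η₂ → c'/2 ≤ c' - Φ₂ (A u) := by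
    intro u hu hgu
    have := hη₂mod (A u) (hAinB u hu.1) hgu
    linarith
  have hbar2 := aux_barrier (hs0 n) (by linarith : (0:ℝ) < c'/2) hder2 hstep2
  have hfin : m ≤ g (s n) := by
    refine le_trans (le_min (min_le_left _ _) ?_) hbar2
    refine le_trans (min_le_right _ _) ?_
    have h9 : 0 ≤ c'/2 * (s n - 0) := mul_nonneg (by linarith) (by linarith [hs0 n])
    linarith
  linarith
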